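/- Let X₁ ~ N(μ₁, σ₁²) and X₂ ~ N(μ₂, σ₂²) be normal random variables, let S⁻ be their counter-monotonic sum, and let g be any distortion function with dual ḡ. If σ₁ ≥ σ₂, then ρ_g[S⁻] = ρ_g[X₁] + ρ_{ḡ}[X₂]; if σ₁ < σ₂, then ρ_g[S⁻] = ρ_{ḡ}[X₁] + ρ_g[X₂]. -/

import Mathlib

open MeasureTheory ProbabilityTheory Set

noncomputable section

variable {Ω : Type*} [MeasurableSpace Ω]

/-- The cumulative distribution function of the random variable `X` under `P`. -/
def rvCdf (P : Measure Ω) (X : Ω → ℝ) : ℝ → ℝ := fun x => (P {ω | X ω ≤ x}).toReal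

/-- The survival function `x ↦ P(X > x)`. -/
def rvSurv (P : Measure Ω) (X : Ω → ℝ) : ℝ → ℝ := fun x => (P {ω | x < X ω}).toReal

/-- The left inverse `F⁻¹(p) = inf {x | F x ≥ p}` of a cdf `F`. -/
def leftInv (F : ℝ → ℝ) (p : ℝ) : ℝ := sInf {x | p ≤ F x}

/-- The right inverse `F⁻¹⁺(p) = sup {x | F x ≤ p}` of a cdf `F`. -/
def rightInv (F : ℝ → ℝ) (p : ℝ) : ℝ := sSup {x | F x ≤ p}

/-- `g : [0,1] → [0,1]` is a distortion function: nondecreasing with `g 0 = 0`, `g 1 = 1`. -/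
def IsDistortion (g : ℝ → ℝ) : Prop :=
  MonotoneOn g (Icc 0 1) ∧ g 0 = 0 ∧ g 1 = 1 ∧ ∀ q ∈ Icc (0:ℝ) 1, g q ∈ Icc (0:ℝ) 1

/-- The dual distortion function `ḡ(q) = 1 - g(1 - q)`. -/
def dualDistortion (g : ℝ → ℝ) : ℝ → ℝ := fun q => 1 - g (1 - q)

/-- The distortion risk measure
`ρ_g[X] = -∫_{-∞}^0 (1 - g(P(X > x))) dx + ∫_0^∞ g(P(X > x)) dx`. -/
def rho (P : Measure Ω) (g : ℝ → ℝ) (X : Ω → ℝ) : ℝ :=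
  (- ∫ x in Iio (0:ℝ), (1 - g (rvSurv P X x))) + ∫ x in Ioi (0:ℝ), g (rvSurv P X x)

/-- The two integrals defining the distortion risk measure `ρ_g[X]` are finite. -/
def RhoFinite (P : Measure Ω) (g : ℝ → ℝ) (X : Ω → ℝ) : Prop :=
  IntegrableOn (fun x => 1 - g (rvSurv P X x)) (Iio (0:ℝ)) volume ∧
  IntegrableOn (fun x => g (rvSurv P X x)) (Ioi (0:ℝ)) volume

/-- `U` is uniformly distributed on `[0,1]`. -/
def IsUniform01 (P : Measure Ω) (U : Ω → ℝ) : Prop :=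
  Measurable U ∧ Measure.map U P = volume.restrict (Icc (0:ℝ) 1)

/-- The counter-monotonic sum `S⁻ = F_{X₁}⁻¹(U) + F_{X₂}⁻¹(1 - U)`. -/
def cmSum (P : Measure Ω) (X₁ X₂ : Ω → ℝ) (U : Ω → ℝ) : Ω → ℝ :=
  fun ω => leftInv (rvCdf P X₁) (U ω) + leftInv (rvCdf P X₂) (1 - U ω)

/-- `X` is symmetric: for some `m`, `P(X ≤ m - x) = P(X ≥ m + x)` for all `x`. -/
def IsSymmetricRV (P : Measure Ω) (X : Ω → ℝ) : Prop :=
  ∃ m : ℝ, ∀ x : ℝ, P {ω | X ω ≤ m - x} = P {ω | m + x ≤ X ω}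

/-- Dispersive order `X ≤_disp Y`. -/
def DispLE (P : Measure Ω) (X Y : Ω → ℝ) : Prop :=
  ∀ u v : ℝ, 0 < v → v ≤ u → u < 1 →
    leftInv (rvCdf P X) u - leftInv (rvCdf P X) v ≤
      leftInv (rvCdf P Y) u - leftInv (rvCdf P Y) v

/-- The cdf of `X` is continuous and strictly increasing on `(F⁻¹⁺(0), F⁻¹(1))`. -/
def CdfRegular (P : Measure Ω) (X : Ω → ℝ) : Prop :=
  ContinuousOn (rvCdf P X) (Ioo (rightInv (rvCdf P X) 0) (leftInv (rvCdf P X) 1)) ∧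
  StrictMonoOn (rvCdf P X) (Ioo (rightInv (rvCdf P X) 0) (leftInv (rvCdf P X) 1))

/-- Value-at-Risk `VaR_p[X] = F_X⁻¹(p)`. -/
def VaR (P : Measure Ω) (X : Ω → ℝ) (p : ℝ) : ℝ := leftInv (rvCdf P X) p

/-- Tail-Value-at-Risk `TVaR_p[X] = (1/(1-p)) ∫_p^1 F_X⁻¹(q) dq`. -/
def TVaR (P : Measure Ω) (X : Ω → ℝ) (p : ℝ) : ℝ :=
  (1 - p)⁻¹ * ∫ q in p..1, leftInv (rvCdf P X) q

/-- Left-Tail-Value-at-Risk `LTVaR_p[X] = (1/p) ∫_0^p F_X⁻¹(q) dq`. -/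
def LTVaR (P : Measure Ω) (X : Ω → ℝ) (p : ℝ) : ℝ :=
  p⁻¹ * ∫ q in (0:ℝ)..p, leftInv (rvCdf P X) q

/-- The standard normal cdf `Φ`. -/
def stdNormCdf : ℝ → ℝ := fun x => ((gaussianReal 0 1) (Iic x)).toReal

/-- The inverse `Φ⁻¹` of the standard normal cdf. -/
def stdNormInv : ℝ → ℝ := fun p => sInf {x | p ≤ stdNormCdf x}

/-- The Wang transform distortion function at level `p`. -/
def wangG (p : ℝ) : ℝ → ℝ := fun q => stdNormCdf (stdNormInv q + stdNormInv p)

/-- The Wang transform risk measure at level `p`. -/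
def WT (P : Measure Ω) (X : Ω → ℝ) (p : ℝ) : ℝ := rho P (wangG p) X

/-- `X ~ N(μ, σ²)`. -/
def IsNormalRV (P : Measure Ω) (X : Ω → ℝ) (μ σ : ℝ) : Prop :=
  Measurable X ∧ Measure.map X P = gaussianReal μ (⟨σ ^ 2, sq_nonneg σ⟩ : NNReal)

/-- `X ~ LN(μ, σ²)`, i.e. `X` is distributed as `exp Z` with `Z ~ N(μ, σ²)`. -/
def IsLogNormalRV (P : Measure Ω) (X : Ω → ℝ) (μ σ : ℝ) : Prop :=
  Measurable X ∧
    Measure.map X P = Measure.map Real.exp (gaussianReal μ (⟨σ ^ 2, sq_nonneg σ⟩ : NNReal))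

/-- `X ~ Student(ν)`: density proportional to `(1 + x²/ν)^(-(ν+1)/2)`. -/
def IsStudentRV (P : Measure Ω) (X : Ω → ℝ) (ν : ℝ) : Prop :=
  Measurable X ∧ ∃ c : ℝ, 0 < c ∧
    Measure.map X P =
      volume.withDensity (fun x => ENNReal.ofReal (c * (1 + x ^ 2 / ν) ^ (-((ν + 1) / 2))))

/-- Extension of a distortion function to `ℝ` by constants. -/
def gExt (g : ℝ → ℝ) : ℝ → ℝ := fun q => if q ≤ 0 then 0 else if 1 ≤ q then 1 else g q

open Classical in
/-- The Lebesgue–Stieltjes measure `dg` associated with (the right-continuous modification of)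
the extension of a distortion function `g` to `ℝ`. -/
def lsMeasure (g : ℝ → ℝ) : Measure ℝ :=
  if h : Monotone (gExt g) then h.stieltjesFunction.measure else 0


/-! ### Auxiliary lemmas about the standard normal cdf -/

section StdNorm

open Filter Topology Real
open scoped NNReal ENNReal

lemma stdNormCdf_eq_integral (x : ℝ) :
    stdNormCdf x = ∫ t in Iic x, gaussianPDFReal 0 1 t := by
  rw [stdNormCdf, gaussianReal_apply_eq_integral 0 one_ne_zero,
    ENNReal.toReal_ofReal (integral_nonneg fun t => gaussianPDFReal_nonneg 0 1 t)]

lemma stdNormCdf_sub_eq {x y : ℝ} (hxy : x ≤ y) :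
    stdNormCdf y - stdNormCdf x = ∫ t in Ioc x y, gaussianPDFReal 0 1 t := by
  have hunion : Iic x ∪ Ioc x y = Iic y := Iic_union_Ioc_eq_Iic hxy
  have hint : ∀ s : Set ℝ, IntegrableOn (gaussianPDFReal 0 1) s volume :=
    fun s => (integrable_gaussianPDFReal 0 1).integrableOn
  have := setIntegral_union (Iic_disjoint_Ioc le_rfl) measurableSet_Ioc (hint (Iic x))
    (hint (Ioc x y)) (f := gaussianPDFReal 0 1) (μ := volume)
  rw [hunion] at this
  rw [stdNormCdf_eq_integral, stdNormCdf_eq_integral, this]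
  ring

lemma stdNormCdf_strictMono : StrictMono stdNormCdf := by
  intro x y hxy
  have h : 0 < ∫ t in Ioc x y, gaussianPDFReal 0 1 t := by
    rw [setIntegral_pos_iff_support_of_nonneg_ae
      (ae_of_all _ fun t => gaussianPDFReal_nonneg 0 1 t)
      ((integrable_gaussianPDFReal 0 1).integrableOn)]
    have hsupp : Function.support (gaussianPDFReal 0 1) = univ :=
      eq_univ_of_forall fun t => (gaussianPDFReal_pos 0 1 t one_ne_zero).ne'
    rw [hsupp, univ_inter, Real.volume_Ioc]
    simp [hxy]
  have := stdNormCdf_sub_eq hxy.le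
  linarith

lemma gaussianPDFReal_le_one (t : ℝ) : gaussianPDFReal 0 1 t ≤ 1 := by
  rw [gaussianPDFReal]
  have h1 : rexp (-(t - 0) ^ 2 / (2 * ((1:ℝ≥0):ℝ))) ≤ 1 := by
    rw [Real.exp_le_one_iff]
    have h0 : (0:ℝ) ≤ (t - 0)^2 := sq_nonneg _
    have h2 : (0:ℝ) < 2 * ((1:ℝ≥0):ℝ) := by norm_num
    rw [div_nonpos_iff]
    right
    exact ⟨by linarith, h2.le⟩
  have h2 : (1:ℝ) ≤ Real.sqrt (2 * Real.pi * ((1:ℝ≥0):ℝ)) := by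
    rw [Real.one_le_sqrt]
    have hc : ((1:ℝ≥0):ℝ) = 1 := NNReal.coe_one
    nlinarith [Real.pi_gt_three]
  have h3 : (Real.sqrt (2 * Real.pi * ((1:ℝ≥0):ℝ)))⁻¹ ≤ 1 := by
    rw [inv_le_one_iff₀]; right; exact h2
  calc (Real.sqrt (2 * Real.pi * ((1:ℝ≥0):ℝ)))⁻¹ * rexp (-(t - 0) ^ 2 / (2 * ((1:ℝ≥0):ℝ)))
      ≤ 1 := mul_le_one₀ h3 (Real.exp_nonneg _) h1

lemma stdNormCdf_sub_le {x y : ℝ} (hxy : x ≤ y) :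
    stdNormCdf y - stdNormCdf x ≤ y - x := by
  rw [stdNormCdf_sub_eq hxy]
  calc ∫ t in Ioc x y, gaussianPDFReal 0 1 t
      ≤ ∫ _ in Ioc x y, (1:ℝ) := by
        apply setIntegral_mono_on ((integrable_gaussianPDFReal 0 1).integrableOn)
          (integrableOn_const (by simp [Real.volume_Ioc]))
          measurableSet_Ioc
        exact fun t _ => gaussianPDFReal_le_one t
    _ = y - x := by
        rw [setIntegral_const, Real.volume_real_Ioc_of_le hxy, smul_eq_mul, mul_one]

lemma stdNormCdf_continuous : Continuous stdNormCdf := by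
  have : LipschitzWith 1 stdNormCdf := by
    apply LipschitzWith.of_dist_le_mul
    intro x y
    rcases le_total x y with h | h
    · rw [Real.dist_eq, Real.dist_eq, abs_sub_comm, abs_of_nonneg
        (by linarith [stdNormCdf_strictMono.monotone h]),
        abs_sub_comm, abs_of_nonneg (by linarith)]
      simpa using stdNormCdf_sub_le h
    · rw [Real.dist_eq, Real.dist_eq, abs_of_nonneg
        (by linarith [stdNormCdf_strictMono.monotone h]),
        abs_of_nonneg (by linarith)]
      simpa using stdNormCdf_sub_le h
  exact this.continuous

lemma stdNormCdf_mem_Icc (x : ℝ) : stdNormCdf x ∈ Icc (0:ℝ) 1 := by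
  constructor
  · exact ENNReal.toReal_nonneg
  · rw [stdNormCdf]
    have : (gaussianReal 0 1) (Iic x) ≤ 1 := prob_le_one
    exact ENNReal.toReal_le_of_le_ofReal zero_le_one (by simpa using this)

lemma stdNormCdf_neg (x : ℝ) : stdNormCdf (-x) = 1 - stdNormCdf x := by
  have heven : ∀ t : ℝ, gaussianPDFReal 0 1 (-t) = gaussianPDFReal 0 1 t := by
    intro t; rw [gaussianPDFReal, gaussianPDFReal]; ring_nf
  have h1 : stdNormCdf (-x) = ∫ t in Ioi x, gaussianPDFReal 0 1 t := by
    rw [stdNormCdf_eq_integral]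
    rw [show (∫ t in Iic (-x), gaussianPDFReal 0 1 t)
        = ∫ t in Iic (-x), gaussianPDFReal 0 1 (-t) from
      setIntegral_congr_fun measurableSet_Iic fun t _ => (heven t).symm]
    rw [integral_comp_neg_Iic (-x) (gaussianPDFReal 0 1), neg_neg]
  have h2 : stdNormCdf x + ∫ t in Ioi x, gaussianPDFReal 0 1 t = 1 := by
    rw [stdNormCdf_eq_integral]
    have hint : ∀ s : Set ℝ, IntegrableOn (gaussianPDFReal 0 1) s volume :=
      fun s => (integrable_gaussianPDFReal 0 1).integrableOn
    have := setIntegral_union (Iic_disjoint_Ioi le_rfl) measurableSet_Ioi (hint (Iic x))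
      (hint (Ioi x)) (f := gaussianPDFReal 0 1) (μ := volume)
    rw [Iic_union_Ioi] at this
    rw [setIntegral_univ, integral_gaussianPDFReal_eq_one 0 one_ne_zero] at this
    linarith [this]
  linarith

lemma stdNormCdf_pos (x : ℝ) : 0 < stdNormCdf x := by
  rw [stdNormCdf_eq_integral]
  rw [setIntegral_pos_iff_support_of_nonneg_ae
    (ae_of_all _ fun t => gaussianPDFReal_nonneg 0 1 t)
    ((integrable_gaussianPDFReal 0 1).integrableOn)]
  have hsupp : Function.support (gaussianPDFReal 0 1) = univ :=
    eq_univ_of_forall fun t => (gaussianPDFReal_pos 0 1 t one_ne_zero).ne'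
  rw [hsupp, univ_inter, Real.volume_Iic]
  exact ENNReal.zero_lt_top

lemma stdNormCdf_lt_one (x : ℝ) : stdNormCdf x < 1 := by
  have := stdNormCdf_pos (-x)
  rw [stdNormCdf_neg] at this
  linarith

lemma tendsto_stdNormCdf_atTop : Tendsto stdNormCdf atTop (𝓝 1) := by
  have h := tendsto_measure_Iic_atTop (gaussianReal 0 1)
  have h2 : Tendsto (fun x => ((gaussianReal 0 1) (Iic x)).toReal) atTop
      (𝓝 ((gaussianReal 0 1) univ).toReal) :=
    (ENNReal.tendsto_toReal (measure_ne_top _ _)).comp h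
  simp at h2
  exact h2

lemma tendsto_stdNormCdf_atBot : Tendsto stdNormCdf atBot (𝓝 0) := by
  have h1 : stdNormCdf = fun x => 1 - stdNormCdf (-x) := by
    funext x
    have := stdNormCdf_neg x
    linarith
  rw [h1]
  have h2 : Tendsto (fun x : ℝ => -x) atBot atTop := tendsto_neg_atBot_atTop
  have h3 : Tendsto (fun x : ℝ => stdNormCdf (-x)) atBot (𝓝 1) :=
    tendsto_stdNormCdf_atTop.comp h2
  simpa using (tendsto_const_nhds (x := (1:ℝ))).sub h3

lemma exists_stdNormCdf_eq {p : ℝ} (hp : p ∈ Ioo (0:ℝ) 1) : ∃ x, stdNormCdf x = p := by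
  obtain ⟨a, ha⟩ := (tendsto_stdNormCdf_atBot.eventually_lt_const hp.1).exists
  obtain ⟨b, hb⟩ := (tendsto_stdNormCdf_atTop.eventually_const_lt hp.2).exists
  have hab : a ≤ b := by
    by_contra hcon
    push_neg at hcon
    have := stdNormCdf_strictMono hcon
    linarith
  have := intermediate_value_Icc hab stdNormCdf_continuous.continuousOn
  have hmem : p ∈ Icc (stdNormCdf a) (stdNormCdf b) := ⟨ha.le, hb.le⟩
  obtain ⟨x, _, hx⟩ := this hmem
  exact ⟨x, hx⟩

lemma stdNormInv_eq_of {x p : ℝ} (hxp : stdNormCdf x = p) : stdNormInv p = x := by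
  have hset : {y | p ≤ stdNormCdf y} = Ici x := by
    ext y
    simp only [mem_setOf_eq, mem_Ici, ← hxp]
    exact stdNormCdf_strictMono.le_iff_le
  rw [stdNormInv, hset, csInf_Ici]

lemma stdNormCdf_stdNormInv {p : ℝ} (hp : p ∈ Ioo (0:ℝ) 1) :
    stdNormCdf (stdNormInv p) = p := by
  obtain ⟨x, hx⟩ := exists_stdNormCdf_eq hp
  rw [stdNormInv_eq_of hx, hx]

lemma lt_stdNormInv_iff {p t : ℝ} (hp : p ∈ Ioo (0:ℝ) 1) :
    t < stdNormInv p ↔ stdNormCdf t < p := by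
  obtain ⟨x, hx⟩ := exists_stdNormCdf_eq hp
  rw [stdNormInv_eq_of hx, ← hx]
  exact ⟨fun h => stdNormCdf_strictMono h, fun h => stdNormCdf_strictMono.lt_iff_lt.1 h⟩

lemma stdNormInv_lt_iff {p t : ℝ} (hp : p ∈ Ioo (0:ℝ) 1) :
    stdNormInv p < t ↔ p < stdNormCdf t := by
  obtain ⟨x, hx⟩ := exists_stdNormCdf_eq hp
  rw [stdNormInv_eq_of hx, ← hx]
  exact ⟨fun h => stdNormCdf_strictMono h, fun h => stdNormCdf_strictMono.lt_iff_lt.1 h⟩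

lemma stdNormInv_of_nonpos {p : ℝ} (hp : p ≤ 0) : stdNormInv p = 0 := by
  have hset : {y | p ≤ stdNormCdf y} = univ :=
    eq_univ_of_forall fun y => le_trans hp (stdNormCdf_pos y).le
  rw [stdNormInv, hset]
  have hnb : ¬ BddBelow (univ : Set ℝ) := by
    rintro ⟨b, hb⟩
    have := hb (mem_univ (b - 1))
    linarith
  rw [csInf_of_not_bddBelow hnb, Real.sInf_empty]

lemma stdNormInv_of_one_le {p : ℝ} (hp : 1 ≤ p) : stdNormInv p = 0 := by
  have hset : {y | p ≤ stdNormCdf y} = (∅ : Set ℝ) := by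
    apply eq_empty_iff_forall_notMem.2
    intro y hy
    exact absurd (le_trans hp hy) (not_le.2 (stdNormCdf_lt_one y))
  rw [stdNormInv, hset, Real.sInf_empty]

lemma stdNormInv_one_sub (p : ℝ) : stdNormInv (1 - p) = - stdNormInv p := by
  rcases le_or_gt p 0 with hp | hp
  · rw [stdNormInv_of_nonpos hp, stdNormInv_of_one_le (by linarith), neg_zero]
  rcases le_or_gt 1 p with hp1 | hp1
  · rw [stdNormInv_of_one_le hp1, stdNormInv_of_nonpos (by linarith), neg_zero]
  · have hpo : p ∈ Ioo (0:ℝ) 1 := ⟨hp, hp1⟩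
    have : stdNormCdf (-stdNormInv p) = 1 - p := by
      rw [stdNormCdf_neg, stdNormCdf_stdNormInv hpo]
    exact stdNormInv_eq_of this

end StdNorm

/-! ### Normal random variables: cdf, survival function, quantiles -/

section NormalRV

variable {Ω : Type*} [MeasurableSpace Ω]

lemma gaussianReal_eq_map {μ σ : ℝ} (hσ : 0 < σ) :
    gaussianReal μ (⟨σ ^ 2, sq_nonneg σ⟩ : NNReal)
      = (gaussianReal 0 1).map (fun y => σ * y + μ) := by
  have h1 : (gaussianReal 0 1).map (fun y => σ * y + μ)
      = ((gaussianReal 0 1).map (fun y => σ * y)).map (fun y => y + μ) := by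
    rw [Measure.map_map (measurable_add_const μ) (measurable_const_mul σ)]
    rfl
  rw [h1]
  have h2 : (gaussianReal 0 1).map (fun y => σ * y) = gaussianReal 0 ⟨σ ^ 2, sq_nonneg σ⟩ := by
    have := gaussianReal_map_const_mul (μ := 0) (v := 1) σ
    rw [this]
    congr 1
    · simp
    · simp
      rfl
  rw [h2]
  have h3 := gaussianReal_map_add_const (μ := 0) (v := (⟨σ ^ 2, sq_nonneg σ⟩ : NNReal)) μ
  simpa using h3.symm

lemma IsNormalRV.cdf_eq {P : Measure Ω} {X : Ω → ℝ} {μ σ : ℝ}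
    (hX : IsNormalRV P X μ σ) (hσ : 0 < σ) (x : ℝ) :
    rvCdf P X x = stdNormCdf ((x - μ) / σ) := by
  have hpre : {ω | X ω ≤ x} = X ⁻¹' (Iic x) := rfl
  have haff : (fun y => σ * y + μ) ⁻¹' (Iic x) = Iic ((x - μ) / σ) := by
    ext y
    simp only [mem_preimage, mem_Iic]
    rw [le_div_iff₀ hσ]
    constructor <;> intro h <;> nlinarith
  rw [rvCdf, hpre, ← Measure.map_apply hX.1 measurableSet_Iic, hX.2,
    gaussianReal_eq_map hσ,
    Measure.map_apply (by fun_prop) measurableSet_Iic, haff]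
  rfl

lemma IsNormalRV.surv_eq {P : Measure Ω} {X : Ω → ℝ} {μ σ : ℝ}
    (hX : IsNormalRV P X μ σ) (hσ : 0 < σ) (x : ℝ) :
    rvSurv P X x = 1 - stdNormCdf ((x - μ) / σ) := by
  have hpre : {ω | x < X ω} = X ⁻¹' (Ioi x) := rfl
  have haff : (fun y => σ * y + μ) ⁻¹' (Ioi x) = Ioi ((x - μ) / σ) := by
    ext y
    simp only [mem_preimage, mem_Ioi]
    rw [div_lt_iff₀ hσ]
    constructor <;> intro h <;> nlinarith
  rw [rvSurv, hpre, ← Measure.map_apply hX.1 measurableSet_Ioi, hX.2,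
    gaussianReal_eq_map hσ,
    Measure.map_apply (by fun_prop) measurableSet_Ioi, haff]
  have hcompl : Ioi ((x - μ) / σ) = (Iic ((x - μ) / σ))ᶜ := compl_Iic.symm
  rw [hcompl, prob_compl_eq_one_sub measurableSet_Iic,
    ENNReal.toReal_sub_of_le prob_le_one ENNReal.one_ne_top]
  simp [stdNormCdf]

lemma IsNormalRV.leftInv_eq {P : Measure Ω} {X : Ω → ℝ} {μ σ : ℝ}
    (hX : IsNormalRV P X μ σ) (hσ : 0 < σ) {u : ℝ} (hu : u ∈ Ioo (0:ℝ) 1) :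
    leftInv (rvCdf P X) u = μ + σ * stdNormInv u := by
  have hset : {x | u ≤ rvCdf P X x} = Ici (μ + σ * stdNormInv u) := by
    ext x
    simp only [mem_setOf_eq, mem_Ici]
    rw [hX.cdf_eq hσ x]
    set t := stdNormInv u with ht
    have hΦ : stdNormCdf t = u := stdNormCdf_stdNormInv hu
    rw [← hΦ, stdNormCdf_strictMono.le_iff_le, le_div_iff₀ hσ]
    constructor <;> intro h <;> nlinarith
  rw [leftInv, hset, csInf_Ici]

end NormalRV

/-! ### The counter-monotonic sum of two normals -/

section CMSum

variable {Ω : Type*} [MeasurableSpace Ω] {P : Measure Ω} [IsProbabilityMeasure P]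
  {X₁ X₂ U : Ω → ℝ} {μ₁ μ₂ σ₁ σ₂ : ℝ}

lemma IsUniform01.ae_mem_Ioo (hU : IsUniform01 P U) : ∀ᵐ ω ∂P, U ω ∈ Ioo (0:ℝ) 1 := by
  rw [ae_iff]
  have hpre : {ω | ¬ U ω ∈ Ioo (0:ℝ) 1} = U ⁻¹' (Ioo (0:ℝ) 1)ᶜ := rfl
  rw [hpre, ← Measure.map_apply hU.1 measurableSet_Ioo.compl, hU.2,
    Measure.restrict_apply measurableSet_Ioo.compl]
  apply measure_mono_null (t := {0, 1})
  · intro x ⟨hx1, hx2⟩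
    simp only [mem_compl_iff, mem_Ioo, not_and, not_lt] at hx1
    rcases hx2.1.eq_or_lt with h0 | h0
    · exact Or.inl h0.symm
    · exact Or.inr (le_antisymm hx2.2 (hx1 h0))
  · exact Set.Countable.measure_zero ((countable_singleton _).insert _) volume

lemma IsUniform01.meas_lt (hU : IsUniform01 P U) {c : ℝ} (hc : c ∈ Icc (0:ℝ) 1) :
    P {ω | c < U ω} = ENNReal.ofReal (1 - c) := by
  have hpre : {ω | c < U ω} = U ⁻¹' (Ioi c) := rfl
  rw [hpre, ← Measure.map_apply hU.1 measurableSet_Ioi, hU.2,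
    Measure.restrict_apply measurableSet_Ioi]
  have : Ioi c ∩ Icc 0 1 = Ioc c 1 := by
    ext x
    simp only [mem_inter_iff, mem_Ioi, mem_Icc, mem_Ioc]
    exact ⟨fun ⟨h1, _, h3⟩ => ⟨h1, h3⟩, fun ⟨h1, h2⟩ => ⟨h1, le_trans hc.1 h1.le, h2⟩⟩
  rw [this, Real.volume_Ioc]

lemma IsUniform01.meas_gt (hU : IsUniform01 P U) {c : ℝ} (hc : c ∈ Icc (0:ℝ) 1) :
    P {ω | U ω < c} = ENNReal.ofReal c := by
  have hpre : {ω | U ω < c} = U ⁻¹' (Iio c) := rfl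
  rw [hpre, ← Measure.map_apply hU.1 measurableSet_Iio, hU.2,
    Measure.restrict_apply measurableSet_Iio]
  have : Iio c ∩ Icc 0 1 = Ico 0 c := by
    ext x
    simp only [mem_inter_iff, mem_Iio, mem_Icc, mem_Ico]
    exact ⟨fun ⟨h1, h2, _⟩ => ⟨h2, h1⟩, fun ⟨h1, h2⟩ => ⟨h2, h1, le_trans h2.le hc.2⟩⟩
  rw [this, Real.volume_Ico, sub_zero]

lemma cmSum_eq_on (h₁ : IsNormalRV P X₁ μ₁ σ₁) (h₂ : IsNormalRV P X₂ μ₂ σ₂)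
    (hσ₁ : 0 < σ₁) (hσ₂ : 0 < σ₂) {ω : Ω} (hu : U ω ∈ Ioo (0:ℝ) 1) :
    cmSum P X₁ X₂ U ω = (μ₁ + μ₂) + (σ₁ - σ₂) * stdNormInv (U ω) := by
  have hu' : 1 - U ω ∈ Ioo (0:ℝ) 1 := ⟨by linarith [hu.2], by linarith [hu.1]⟩
  rw [cmSum, h₁.leftInv_eq hσ₁ hu, h₂.leftInv_eq hσ₂ hu', stdNormInv_one_sub]
  ring

lemma cm_surv_pos (h₁ : IsNormalRV P X₁ μ₁ σ₁) (h₂ : IsNormalRV P X₂ μ₂ σ₂)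
    (hσ₁ : 0 < σ₁) (hσ₂ : 0 < σ₂) (hU : IsUniform01 P U) (hs : σ₂ < σ₁) (x : ℝ) :
    rvSurv P (cmSum P X₁ X₂ U) x
      = 1 - stdNormCdf ((x - (μ₁ + μ₂)) / (σ₁ - σ₂)) := by
  have hspos : (0:ℝ) < σ₁ - σ₂ := by linarith
  have hcIcc : stdNormCdf ((x - (μ₁ + μ₂)) / (σ₁ - σ₂)) ∈ Icc (0:ℝ) 1 :=
    ⟨(stdNormCdf_pos _).le, (stdNormCdf_lt_one _).le⟩
  have hae : {ω | x < cmSum P X₁ X₂ U ω}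
      =ᵐ[P] {ω | stdNormCdf ((x - (μ₁ + μ₂)) / (σ₁ - σ₂)) < U ω} := by
    rw [Filter.eventuallyEq_set]
    filter_upwards [hU.ae_mem_Ioo] with ω hu
    show _ ↔ _
    rw [cmSum_eq_on h₁ h₂ hσ₁ hσ₂ hu, ← lt_stdNormInv_iff hu, div_lt_iff₀ hspos]
    constructor <;> intro h <;> nlinarith
  rw [rvSurv, measure_congr hae, hU.meas_lt hcIcc,
    ENNReal.toReal_ofReal (by linarith [hcIcc.2])]

lemma cm_surv_neg (h₁ : IsNormalRV P X₁ μ₁ σ₁) (h₂ : IsNormalRV P X₂ μ₂ σ₂)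
    (hσ₁ : 0 < σ₁) (hσ₂ : 0 < σ₂) (hU : IsUniform01 P U) (hs : σ₁ < σ₂) (x : ℝ) :
    rvSurv P (cmSum P X₁ X₂ U) x
      = 1 - stdNormCdf ((x - (μ₁ + μ₂)) / (σ₂ - σ₁)) := by
  have hneg : σ₁ - σ₂ < 0 := by linarith
  have hcIcc : stdNormCdf ((x - (μ₁ + μ₂)) / (σ₁ - σ₂)) ∈ Icc (0:ℝ) 1 :=
    ⟨(stdNormCdf_pos _).le, (stdNormCdf_lt_one _).le⟩
  have hae : {ω | x < cmSum P X₁ X₂ U ω}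
      =ᵐ[P] {ω | U ω < stdNormCdf ((x - (μ₁ + μ₂)) / (σ₁ - σ₂))} := by
    rw [Filter.eventuallyEq_set]
    filter_upwards [hU.ae_mem_Ioo] with ω hu
    show _ ↔ _
    rw [cmSum_eq_on h₁ h₂ hσ₁ hσ₂ hu, ← stdNormInv_lt_iff hu, lt_div_iff_of_neg hneg]
    constructor <;> intro h <;> nlinarith
  have hflip : stdNormCdf ((x - (μ₁ + μ₂)) / (σ₁ - σ₂))
      = 1 - stdNormCdf ((x - (μ₁ + μ₂)) / (σ₂ - σ₁)) := by
    rw [show σ₁ - σ₂ = -(σ₂ - σ₁) from by ring, div_neg, stdNormCdf_neg]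
  rw [rvSurv, measure_congr hae, hU.meas_gt hcIcc,
    ENNReal.toReal_ofReal hcIcc.1, hflip]

lemma cm_surv_zero (h₁ : IsNormalRV P X₁ μ₁ σ₁) (h₂ : IsNormalRV P X₂ μ₂ σ₂)
    (hσ₁ : 0 < σ₁) (hσ₂ : 0 < σ₂) (hU : IsUniform01 P U) (hs : σ₁ = σ₂) (x : ℝ) :
    rvSurv P (cmSum P X₁ X₂ U) x
      = if x < μ₁ + μ₂ then 1 else 0 := by
  set m := μ₁ + μ₂
  have hae : {ω | x < cmSum P X₁ X₂ U ω} =ᵐ[P] {ω : Ω | x < m} := by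
    rw [Filter.eventuallyEq_set]
    filter_upwards [hU.ae_mem_Ioo] with ω hu
    show _ ↔ _
    rw [cmSum_eq_on h₁ h₂ hσ₁ hσ₂ hu, show σ₁ - σ₂ = 0 by linarith, zero_mul, add_zero]
  rw [rvSurv, measure_congr hae]
  by_cases hxm : x < m
  · have : {ω : Ω | x < m} = univ := eq_univ_of_forall fun ω => hxm
    rw [this, if_pos hxm]
    simp
  · have : {ω : Ω | x < m} = (∅ : Set Ω) := eq_empty_iff_forall_notMem.2 fun ω => hxm
    rw [this, if_neg hxm]
    simp

end CMSum

/-! ### Integral machinery for distortion risk measures of location-scale families -/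

section IntegralMachinery

lemma integral_shift_Ioi (f : ℝ → ℝ) (c : ℝ) :
    ∫ x in Ioi (0:ℝ), f (x - c) = ∫ x in Ioi (-c), f x := by
  rw [← integral_indicator (measurableSet_Ioi (a := (0:ℝ))),
    ← integral_indicator (measurableSet_Ioi (a := -c))]
  have hfun : (Ioi (0:ℝ)).indicator (fun x => f (x - c))
      = fun x => (Ioi (-c)).indicator f (x - c) := by
    funext x
    by_cases hx : (0:ℝ) < x
    · rw [indicator_of_mem (mem_Ioi.2 hx), indicator_of_mem (mem_Ioi.2 (by linarith))]
    · rw [indicator_of_notMem (fun h => hx (mem_Ioi.1 h)),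
        indicator_of_notMem (fun h => hx (by have := mem_Ioi.1 h; linarith))]
  rw [hfun]
  exact integral_sub_right_eq_self ((Ioi (-c)).indicator f) c

lemma integrableOn_shift_Ioi (f : ℝ → ℝ) (c : ℝ) :
    IntegrableOn (fun x => f (x - c)) (Ioi (0:ℝ)) volume ↔ IntegrableOn f (Ioi (-c)) volume := by
  rw [← integrable_indicator_iff (measurableSet_Ioi (a := (0:ℝ))),
    ← integrable_indicator_iff (measurableSet_Ioi (a := -c))]
  have hfun : (Ioi (0:ℝ)).indicator (fun x => f (x - c))
      = fun x => (Ioi (-c)).indicator f (x - c) := by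
    funext x
    by_cases hx : (0:ℝ) < x
    · rw [indicator_of_mem (mem_Ioi.2 hx), indicator_of_mem (mem_Ioi.2 (by linarith))]
    · rw [indicator_of_notMem (fun h => hx (mem_Ioi.1 h)),
        indicator_of_notMem (fun h => hx (by have := mem_Ioi.1 h; linarith))]
  rw [hfun]
  constructor
  · intro h
    have := h.comp_add_right c
    simpa using this
  · intro h
    exact h.comp_sub_right c

lemma integral_affine_Ioi (f : ℝ → ℝ) {σ : ℝ} (hσ : 0 < σ) (μ : ℝ) :
    ∫ x in Ioi (0:ℝ), f ((x - μ) / σ) = σ * ∫ x in Ioi (-μ / σ), f x := by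
  have hkey := integral_comp_mul_left_Ioi (fun y => f (y - μ / σ)) 0 (inv_pos.2 hσ)
  have hfun : ∀ x : ℝ, f ((x - μ) / σ) = f (σ⁻¹ * x - μ / σ) := by
    intro x; congr 1; field_simp
  have h2 : ∫ x in Ioi (0:ℝ), f ((x - μ) / σ)
      = (σ⁻¹)⁻¹ • ∫ y in Ioi (σ⁻¹ * 0), f (y - μ / σ) := by
    rw [← hkey]
    exact setIntegral_congr_fun measurableSet_Ioi fun x _ => hfun x
  rw [h2]
  simp only [mul_zero, inv_inv, smul_eq_mul]
  rw [integral_shift_Ioi f (μ / σ), neg_div]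

lemma integrableOn_affine_Ioi (f : ℝ → ℝ) {σ : ℝ} (hσ : 0 < σ) (μ : ℝ) :
    IntegrableOn (fun x => f ((x - μ) / σ)) (Ioi (0:ℝ)) volume
      ↔ IntegrableOn f (Ioi (-μ / σ)) volume := by
  have hfun : (fun x => f ((x - μ) / σ)) = fun x => (fun y => f (y - μ / σ)) (σ⁻¹ * x) := by
    funext x; congr 1; field_simp
  rw [hfun, integrableOn_Ioi_comp_mul_left_iff (fun y => f (y - μ / σ)) 0 (inv_pos.2 hσ),
    mul_zero, integrableOn_shift_Ioi f (μ / σ), neg_div]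

lemma integral_reflect' (f : ℝ → ℝ) (c : ℝ) :
    ∫ x in Ioi c, f (-x) = ∫ x in Iio (-c), f x := by
  rw [integral_comp_neg_Ioi c f, integral_Iic_eq_integral_Iio]

lemma integrableOn_reflect' (f : ℝ → ℝ) (c : ℝ) :
    IntegrableOn (fun x => f (-x)) (Ioi c) volume ↔ IntegrableOn f (Iio (-c)) volume := by
  have hemb : MeasurableEmbedding (fun x : ℝ => -x) :=
    (Homeomorph.neg ℝ).measurableEmbedding
  have h1 : (volume : Measure ℝ).restrict (Iio (-c))
      = ((volume : Measure ℝ).restrict (Ioi c)).map (fun x => -x) := by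
    calc (volume : Measure ℝ).restrict (Iio (-c))
        = (Measure.map (fun x : ℝ => -x) volume).restrict (Iio (-c)) := by
          rw [Measure.map_neg_eq_self]
      _ = ((volume : Measure ℝ).restrict ((fun x : ℝ => -x) ⁻¹' (Iio (-c)))).map
            (fun x : ℝ => -x) := hemb.restrict_map _ _
      _ = ((volume : Measure ℝ).restrict (Ioi c)).map (fun x : ℝ => -x) := by
          have hset : (fun x : ℝ => -x) ⁻¹' (Iio (-c)) = Ioi c := by
            ext x
            simp only [mem_preimage, mem_Iio, mem_Ioi]
            constructor <;> intro h <;> linarith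
          rw [hset]
  constructor
  · intro h
    rw [IntegrableOn, h1, hemb.integrable_map_iff]
    exact h
  · intro h
    rw [IntegrableOn, h1, hemb.integrable_map_iff] at h
    exact h

lemma integral_affine_Iio (f : ℝ → ℝ) {σ : ℝ} (hσ : 0 < σ) (μ : ℝ) :
    ∫ x in Iio (0:ℝ), f ((x - μ) / σ) = σ * ∫ x in Iio (-μ / σ), f x := by
  have h0 : ∫ x in Iio (0:ℝ), f ((x - μ) / σ)
      = ∫ x in Ioi (0:ℝ), f ((-x - μ) / σ) := by
    rw [show (Iio (0:ℝ)) = Iio (-(0:ℝ)) by rw [neg_zero]]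
    exact (integral_reflect' (fun x => f ((x - μ) / σ)) 0).symm
  rw [h0]
  have hfun : ∀ x : ℝ, f ((-x - μ) / σ) = (fun y => f (-y)) ((x - (-μ)) / σ) := by
    intro x
    show f ((-x - μ) / σ) = f (-((x - -μ) / σ))
    congr 1
    ring
  rw [setIntegral_congr_fun measurableSet_Ioi fun x _ => hfun x,
    integral_affine_Ioi (fun y => f (-y)) hσ (-μ)]
  congr 1
  rw [show -(-μ) / σ = μ / σ by rw [neg_neg], integral_reflect' f (μ / σ)]
  congr 1
  rw [neg_div]

lemma integrableOn_affine_Iio (f : ℝ → ℝ) {σ : ℝ} (hσ : 0 < σ) (μ : ℝ) :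
    IntegrableOn (fun x => f ((x - μ) / σ)) (Iio (0:ℝ)) volume
      ↔ IntegrableOn f (Iio (-μ / σ)) volume := by
  have h0 : IntegrableOn (fun x => f ((x - μ) / σ)) (Iio (0:ℝ)) volume
      ↔ IntegrableOn (fun x => f ((-x - μ) / σ)) (Ioi (0:ℝ)) volume := by
    rw [show (Iio (0:ℝ)) = Iio (-(0:ℝ)) by rw [neg_zero]]
    exact (integrableOn_reflect' (fun x => f ((x - μ) / σ)) 0).symm
  rw [h0]
  have hfun : (fun x : ℝ => f ((-x - μ) / σ)) = fun x => (fun y => f (-y)) ((x - (-μ)) / σ) := by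
    funext x
    show f ((-x - μ) / σ) = f (-((x - -μ) / σ))
    congr 1
    ring
  rw [hfun, integrableOn_affine_Ioi (fun y => f (-y)) hσ (-μ),
    show -(-μ) / σ = μ / σ by rw [neg_neg],
    integrableOn_reflect' f (μ / σ), neg_div]

lemma integrableOn_bounded_of_Icc {h : ℝ → ℝ} (hmeas : Measurable h)
    (h0 : ∀ y, 0 ≤ h y) (h1 : ∀ y, h y ≤ 1) {a b : ℝ} (s : Set ℝ) (hs : s ⊆ Icc a b) :
    IntegrableOn h s volume := by
  apply Measure.integrableOn_of_bounded (M := 1)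
  · exact ((measure_mono hs).trans_lt (by rw [Real.volume_Icc]; exact ENNReal.ofReal_lt_top)).ne
  · exact hmeas.aestronglyMeasurable
  · refine ae_of_all _ fun y => ?_
    rw [Real.norm_eq_abs, abs_le]
    exact ⟨by linarith [h0 y], h1 y⟩

lemma B_shift {h : ℝ → ℝ} (hmeas : Measurable h)
    (h0 : ∀ y, 0 ≤ h y) (h1 : ∀ y, h y ≤ 1) (a : ℝ)
    (hi1 : IntegrableOn (fun x => 1 - h x) (Iio a) volume)
    (hi2 : IntegrableOn h (Ioi a) volume) :
    (- ∫ x in Iio a, (1 - h x)) + ∫ x in Ioi a, h x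
      = -a + ((- ∫ x in Iio (0:ℝ), (1 - h x)) + ∫ x in Ioi (0:ℝ), h x) := by
  have hmeas' : Measurable (fun x => 1 - h x) := measurable_const.sub hmeas
  have h0' : ∀ y, 0 ≤ 1 - h y := fun y => by linarith [h1 y]
  have h1' : ∀ y, 1 - h y ≤ 1 := fun y => by linarith [h0 y]
  rcases le_or_gt a 0 with hca | hca
  · -- a ≤ 0
    have hIoi : Ioi a = Ioc a 0 ∪ Ioi (0:ℝ) := (Ioc_union_Ioi_eq_Ioi hca).symm
    have hIio : Iio (0:ℝ) = Iio a ∪ Ico a 0 := (Iio_union_Ico_eq_Iio hca).symm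
    have hint_h_mid : IntegrableOn h (Ioc a 0) volume :=
      integrableOn_bounded_of_Icc hmeas h0 h1 _ Ioc_subset_Icc_self
    have hint_h_Ioi0 : IntegrableOn h (Ioi (0:ℝ)) volume :=
      hi2.mono_set (Ioi_subset_Ioi hca)
    have hint_1h_mid : IntegrableOn (fun x => 1 - h x) (Ico a 0) volume :=
      integrableOn_bounded_of_Icc hmeas' h0' h1' _ Ico_subset_Icc_self
    have e1 : ∫ x in Ioi a, h x = (∫ x in Ioc a 0, h x) + ∫ x in Ioi (0:ℝ), h x := by
      rw [hIoi]
      exact setIntegral_union (Ioc_disjoint_Ioi le_rfl) measurableSet_Ioi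
        hint_h_mid hint_h_Ioi0
    have e2 : ∫ x in Iio (0:ℝ), (1 - h x)
        = (∫ x in Iio a, (1 - h x)) + ∫ x in Ico a 0, (1 - h x) := by
      rw [hIio]
      exact setIntegral_union (disjoint_left.2 fun x hx hx2 => absurd hx2.1 (not_le.2 hx)) measurableSet_Ico hi1 hint_1h_mid
    have e3 : (∫ x in Ico a 0, (1 - h x)) + ∫ x in Ioc a 0, h x = -a := by
      rw [integral_Ico_eq_integral_Ioo, integral_Ioc_eq_integral_Ioo]
      have : (∫ x in Ioo a 0, (1 - h x)) + ∫ x in Ioo a 0, h x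
          = ∫ x in Ioo a 0, ((1 - h x) + h x) := by
        rw [integral_add (hint_1h_mid.mono_set Ioo_subset_Ico_self)
          (hint_h_mid.mono_set Ioo_subset_Ioc_self)]
      rw [this]
      simp only [sub_add_cancel]
      rw [setIntegral_const, Real.volume_real_Ioo_of_le (by linarith), smul_eq_mul, mul_one]
      linarith
    linarith
  · -- 0 < a
    have hIoi : Ioi (0:ℝ) = Ioc 0 a ∪ Ioi a := (Ioc_union_Ioi_eq_Ioi hca.le).symm
    have hIio : Iio a = Iio (0:ℝ) ∪ Ico 0 a := (Iio_union_Ico_eq_Iio hca.le).symm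
    have hint_h_mid : IntegrableOn h (Ioc 0 a) volume :=
      integrableOn_bounded_of_Icc hmeas h0 h1 _ Ioc_subset_Icc_self
    have hint_1h_mid : IntegrableOn (fun x => 1 - h x) (Ico 0 a) volume :=
      integrableOn_bounded_of_Icc hmeas' h0' h1' _ Ico_subset_Icc_self
    have hint_1h_Iio0 : IntegrableOn (fun x => 1 - h x) (Iio (0:ℝ)) volume :=
      hi1.mono_set (Iio_subset_Iio hca.le)
    have e1 : ∫ x in Ioi (0:ℝ), h x = (∫ x in Ioc 0 a, h x) + ∫ x in Ioi a, h x := by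
      rw [hIoi]
      exact setIntegral_union (Ioc_disjoint_Ioi le_rfl) measurableSet_Ioi hint_h_mid hi2
    have e2 : ∫ x in Iio a, (1 - h x)
        = (∫ x in Iio (0:ℝ), (1 - h x)) + ∫ x in Ico 0 a, (1 - h x) := by
      rw [hIio]
      exact setIntegral_union (disjoint_left.2 fun x hx hx2 => absurd hx2.1 (not_le.2 hx)) measurableSet_Ico
        hint_1h_Iio0 hint_1h_mid
    have e3 : (∫ x in Ico 0 a, (1 - h x)) + ∫ x in Ioc 0 a, h x = a := by
      rw [integral_Ico_eq_integral_Ioo, integral_Ioc_eq_integral_Ioo]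
      have : (∫ x in Ioo 0 a, (1 - h x)) + ∫ x in Ioo 0 a, h x
          = ∫ x in Ioo 0 a, ((1 - h x) + h x) := by
        rw [integral_add (hint_1h_mid.mono_set Ioo_subset_Ico_self)
          (hint_h_mid.mono_set Ioo_subset_Ioc_self)]
      rw [this]
      simp only [sub_add_cancel]
      rw [setIntegral_const, Real.volume_real_Ioo_of_le (by linarith), smul_eq_mul, mul_one]
      linarith
    linarith

/-- Master lemma: the distortion risk measure of a random variable whose transformed
survival function is `h((x-μ)/σ)` equals `μ + σ * B(h)`. -/
lemma rho_eq_affine {Ω : Type*} [MeasurableSpace Ω] (P : Measure Ω)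
    (g : ℝ → ℝ) (X : Ω → ℝ) (μ σ : ℝ) (h : ℝ → ℝ) (hσ : 0 < σ)
    (hmeas : Measurable h) (h0 : ∀ y, 0 ≤ h y) (h1 : ∀ y, h y ≤ 1)
    (hsurv : ∀ x, g (rvSurv P X x) = h ((x - μ) / σ))
    (hfin : RhoFinite P g X) :
    rho P g X = μ + σ * ((- ∫ x in Iio (0:ℝ), (1 - h x)) + ∫ x in Ioi (0:ℝ), h x) := by
  have hfun : (fun x => g (rvSurv P X x)) = fun x => h ((x - μ) / σ) := funext hsurv
  have hfun' : (fun x => 1 - g (rvSurv P X x)) = fun x => (fun y => 1 - h y) ((x - μ) / σ) := by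
    funext x; rw [hsurv x]
  have hi1 : IntegrableOn (fun y => 1 - h y) (Iio (-μ / σ)) volume := by
    rw [← integrableOn_affine_Iio (fun y => 1 - h y) hσ μ, ← hfun']
    exact hfin.1
  have hi2 : IntegrableOn h (Ioi (-μ / σ)) volume := by
    rw [← integrableOn_affine_Ioi h hσ μ, ← hfun]
    exact hfin.2
  have hB := B_shift hmeas h0 h1 (-μ / σ) hi1 hi2
  have e1 : ∫ x in Ioi (0:ℝ), g (rvSurv P X x) = σ * ∫ x in Ioi (-μ / σ), h x := by
    rw [show (∫ x in Ioi (0:ℝ), g (rvSurv P X x)) = ∫ x in Ioi (0:ℝ), h ((x - μ) / σ) by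
      rw [← hfun], integral_affine_Ioi h hσ μ]
  have e2 : ∫ x in Iio (0:ℝ), (1 - g (rvSurv P X x))
      = σ * ∫ x in Iio (-μ / σ), (1 - h x) := by
    rw [show (∫ x in Iio (0:ℝ), (1 - g (rvSurv P X x)))
        = ∫ x in Iio (0:ℝ), (fun y => 1 - h y) ((x - μ) / σ) by rw [← hfun'],
      integral_affine_Iio (fun y => 1 - h y) hσ μ]
  have hkey : σ * ((- ∫ x in Iio (-μ / σ), (1 - h x)) + ∫ x in Ioi (-μ / σ), h x)
      = μ + σ * ((- ∫ x in Iio (0:ℝ), (1 - h x)) + ∫ x in Ioi (0:ℝ), h x) := by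
    rw [hB]
    field_simp
  rw [rho, e1, e2]
  ring_nf
  ring_nf at hkey
  linarith [hkey]

/-- The dual `B` functional is the negative of the original one. -/
lemma B_dual {h k : ℝ → ℝ} (hk : ∀ y, k y = 1 - h (-y)) :
    (- ∫ x in Iio (0:ℝ), (1 - k x)) + ∫ x in Ioi (0:ℝ), k x
      = -((- ∫ x in Iio (0:ℝ), (1 - h x)) + ∫ x in Ioi (0:ℝ), h x) := by
  have e1 : ∫ x in Iio (0:ℝ), (1 - k x) = ∫ x in Ioi (0:ℝ), h x := by
    have h2 := integral_reflect' (fun y => (1:ℝ) - k y) 0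
    rw [neg_zero] at h2
    rw [← h2]
    refine setIntegral_congr_fun measurableSet_Ioi fun x _ => ?_
    show (1:ℝ) - k (-x) = h x
    rw [hk (-x), neg_neg]
    ring
  have e2 : ∫ x in Ioi (0:ℝ), k x = ∫ x in Iio (0:ℝ), (1 - h x) := by
    have h2 := integral_reflect' (fun y => (1:ℝ) - h y) 0
    rw [neg_zero] at h2
    rw [← h2]
    exact setIntegral_congr_fun measurableSet_Ioi fun x _ => hk x
  rw [e1, e2]
  ring

/-- The distortion risk measure of an (a.s.) constant random variable. -/
lemma rho_eq_const {Ω : Type*} [MeasurableSpace Ω] (P : Measure Ω)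
    (g : ℝ → ℝ) (X : Ω → ℝ) (m : ℝ) (hg0 : g 0 = 0) (hg1 : g 1 = 1)
    (hsurv : ∀ x, rvSurv P X x = if x < m then 1 else 0) :
    rho P g X = m := by
  have hfun : (fun x => g (rvSurv P X x)) = (Iio m).indicator (fun _ => (1:ℝ)) := by
    funext x
    rw [hsurv x]
    by_cases hx : x < m
    · rw [if_pos hx, hg1, indicator_of_mem (mem_Iio.2 hx)]
    · rw [if_neg hx, hg0, indicator_of_notMem (fun h => hx (mem_Iio.1 h))]
  have hfun' : (fun x => 1 - g (rvSurv P X x)) = (Ici m).indicator (fun _ => (1:ℝ)) := by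
    funext x
    rw [hsurv x]
    by_cases hx : x < m
    · rw [if_pos hx, hg1, indicator_of_notMem (fun h => absurd hx (not_lt.2 (mem_Ici.1 h)))]
      ring
    · rw [if_neg hx, hg0, indicator_of_mem (mem_Ici.2 (not_lt.1 hx))]
      ring
  have e1 : ∫ x in Ioi (0:ℝ), g (rvSurv P X x) = max m 0 := by
    rw [hfun, integral_indicator_const (1:ℝ) measurableSet_Iio,
      measureReal_restrict_apply measurableSet_Iio]
    have : Iio m ∩ Ioi (0:ℝ) = Ioo 0 m := by
      ext x; simp only [mem_inter_iff, mem_Iio, mem_Ioi, mem_Ioo]; tauto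
    rw [this, Real.volume_real_Ioo]
    simp [ENNReal.toReal_ofReal']
  have e2 : ∫ x in Iio (0:ℝ), (1 - g (rvSurv P X x)) = max (-m) 0 := by
    rw [hfun', integral_indicator_const (1:ℝ) measurableSet_Ici,
      measureReal_restrict_apply measurableSet_Ici]
    have : Ici m ∩ Iio (0:ℝ) = Ico m 0 := Ici_inter_Iio
    rw [this, Real.volume_real_Ico]
    simp [ENNReal.toReal_ofReal']
  rw [rho, e1, e2]
  rcases le_total m 0 with hm | hm
  · rw [max_eq_left (by linarith), max_eq_right hm]
    linarith
  · rw [max_eq_right (by linarith), max_eq_left hm]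
    linarith

end IntegralMachinery

/-- distortion risk measure decomposition of a counter-monotonic
sum of two normal random variables. -/
theorem normal_cm_sum_distortion
    (P : Measure Ω) [IsProbabilityMeasure P]
    (X₁ X₂ U : Ω → ℝ) (μ₁ μ₂ σ₁ σ₂ : ℝ) (hσ₁ : 0 < σ₁) (hσ₂ : 0 < σ₂)
    (h₁ : IsNormalRV P X₁ μ₁ σ₁) (h₂ : IsNormalRV P X₂ μ₂ σ₂)
    (hU : IsUniform01 P U)
    (g : ℝ → ℝ) (hg : IsDistortion g)
    (hfinS : RhoFinite P g (cmSum P X₁ X₂ U))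
    (hfin₁ : RhoFinite P g X₁) (hfin₁' : RhoFinite P (dualDistortion g) X₁)
    (hfin₂ : RhoFinite P g X₂) (hfin₂' : RhoFinite P (dualDistortion g) X₂) :
    (σ₂ ≤ σ₁ →
      rho P g (cmSum P X₁ X₂ U) = rho P g X₁ + rho P (dualDistortion g) X₂) ∧
    (σ₁ < σ₂ →
      rho P g (cmSum P X₁ X₂ U) = rho P (dualDistortion g) X₁ + rho P g X₂) := by
  obtain ⟨hgmono, hg0, hg1, hgIcc⟩ := hg
  set h : ℝ → ℝ := fun y => g (1 - stdNormCdf y) with hhdef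
  set k : ℝ → ℝ := fun y => 1 - g (stdNormCdf y) with hkdef
  have hΦmem : ∀ y : ℝ, stdNormCdf y ∈ Icc (0:ℝ) 1 := stdNormCdf_mem_Icc
  have hΦmem' : ∀ y : ℝ, (1 - stdNormCdf y) ∈ Icc (0:ℝ) 1 := fun y =>
    ⟨by linarith [(hΦmem y).2], by linarith [(hΦmem y).1]⟩
  have hh0 : ∀ y, 0 ≤ h y := fun y => (hgIcc _ (hΦmem' y)).1
  have hh1 : ∀ y, h y ≤ 1 := fun y => (hgIcc _ (hΦmem' y)).2
  have hhanti : Antitone h := by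
    intro a b hab
    exact hgmono (hΦmem' b) (hΦmem' a)
      (by linarith [stdNormCdf_strictMono.monotone hab])
  have hhmeas : Measurable h := hhanti.measurable
  have hk0 : ∀ y, 0 ≤ k y := fun y => by
    have := (hgIcc _ (hΦmem y)).2
    simp only [hkdef]
    linarith
  have hk1 : ∀ y, k y ≤ 1 := fun y => by
    have := (hgIcc _ (hΦmem y)).1
    simp only [hkdef]
    linarith
  have hkanti : Antitone k := by
    intro a b hab
    have := hgmono (hΦmem a) (hΦmem b) (stdNormCdf_strictMono.monotone hab)
    simp only [hkdef]
    linarith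
  have hkmeas : Measurable k := hkanti.measurable
  have hk : ∀ y, k y = 1 - h (-y) := by
    intro y
    simp only [hkdef, hhdef]
    rw [stdNormCdf_neg, sub_sub_cancel]
  have hBk := B_dual hk
  have E1 : rho P g X₁
      = μ₁ + σ₁ * ((- ∫ x in Iio (0:ℝ), (1 - h x)) + ∫ x in Ioi (0:ℝ), h x) :=
    rho_eq_affine P g X₁ μ₁ σ₁ h hσ₁ hhmeas hh0 hh1
      (fun x => by rw [h₁.surv_eq hσ₁ x]) hfin₁
  have E1' : rho P (dualDistortion g) X₁
      = μ₁ + σ₁ * ((- ∫ x in Iio (0:ℝ), (1 - k x)) + ∫ x in Ioi (0:ℝ), k x) :=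
    rho_eq_affine P (dualDistortion g) X₁ μ₁ σ₁ k hσ₁ hkmeas hk0 hk1
      (fun x => by
        rw [dualDistortion, h₁.surv_eq hσ₁ x]
        show 1 - g (1 - (1 - stdNormCdf ((x - μ₁) / σ₁))) = _
        rw [sub_sub_cancel]) hfin₁'
  have E2 : rho P g X₂
      = μ₂ + σ₂ * ((- ∫ x in Iio (0:ℝ), (1 - h x)) + ∫ x in Ioi (0:ℝ), h x) :=
    rho_eq_affine P g X₂ μ₂ σ₂ h hσ₂ hhmeas hh0 hh1
      (fun x => by rw [h₂.surv_eq hσ₂ x]) hfin₂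
  have E2' : rho P (dualDistortion g) X₂
      = μ₂ + σ₂ * ((- ∫ x in Iio (0:ℝ), (1 - k x)) + ∫ x in Ioi (0:ℝ), k x) :=
    rho_eq_affine P (dualDistortion g) X₂ μ₂ σ₂ k hσ₂ hkmeas hk0 hk1
      (fun x => by
        rw [dualDistortion, h₂.surv_eq hσ₂ x]
        show 1 - g (1 - (1 - stdNormCdf ((x - μ₂) / σ₂))) = _
        rw [sub_sub_cancel]) hfin₂'
  rw [hBk] at E1' E2'
  constructor
  · intro hle
    rcases eq_or_lt_of_le hle with heq | hlt
    · -- σ₂ = σ₁ : the counter-monotonic sum is the constant μ₁ + μ₂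
      have ES : rho P g (cmSum P X₁ X₂ U) = μ₁ + μ₂ :=
        rho_eq_const P g _ (μ₁ + μ₂) hg0 hg1
          (fun x => cm_surv_zero h₁ h₂ hσ₁ hσ₂ hU heq.symm x)
      rw [ES, E1, E2']
      rw [← heq]
      ring
    · have ES : rho P g (cmSum P X₁ X₂ U)
          = (μ₁ + μ₂) + (σ₁ - σ₂) *
            ((- ∫ x in Iio (0:ℝ), (1 - h x)) + ∫ x in Ioi (0:ℝ), h x) :=
        rho_eq_affine P g (cmSum P X₁ X₂ U) (μ₁ + μ₂) (σ₁ - σ₂) h (by linarith)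
          hhmeas hh0 hh1
          (fun x => by rw [cm_surv_pos h₁ h₂ hσ₁ hσ₂ hU hlt x]) hfinS
      rw [ES, E1, E2']
      ring
  · intro hlt
    have ES : rho P g (cmSum P X₁ X₂ U)
        = (μ₁ + μ₂) + (σ₂ - σ₁) *
          ((- ∫ x in Iio (0:ℝ), (1 - h x)) + ∫ x in Ioi (0:ℝ), h x) :=
      rho_eq_affine P g (cmSum P X₁ X₂ U) (μ₁ + μ₂) (σ₂ - σ₁) h (by linarith)
        hhmeas hh0 hh1
        (fun x => by rw [cm_surv_neg h₁ h₂ hσ₁ hσ₂ hU hlt x]) hfinS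
    rw [ES, E1', E2]
    ring

end
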